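/- Let g be the 3-dimensional real Lie algebra with basis x₁, x₂, x₃ and bracket ⁅x₁,x₂⁆ = x₃, ⁅x₂,x₃⁆ = 0, ⁅x₃,x₁⁆ = 0, and equip its dual g* (with dual basis ξ¹, ξ², ξ³) with the Lie bracket ⁅ξ¹,ξ²⁆ = ξ², ⁅ξ²,ξ³⁆ = 0, ⁅ξ³,ξ¹⁆ = −ξ³. Then there is no ℝ-linear map S : g* → End(g*) satisfying −ad*_x ∘ S(ξ) + S(ξ) ∘ ad*_x + S(ad*_x ξ) + ad*_{ad*_ξ x} = 0 for all x ∈ g and ξ ∈ g*. (Consequently the Atiyah class of the associated Lie pair (g ⋈ g*, g) does not vanish.) -/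

import Mathlib

open Module

attribute [local instance 100] LieRing.ofAssociativeRing

/-- `adStar x` is the dual (transpose) of `ad x : g →ₗ[ℝ] g`,
so `adStar x ξ y = ξ ⁅x, y⁆`. -/
noncomputable def adStar (g : Type*) [LieRing g] [LieAlgebra ℝ g] :
    g →ₗ[ℝ] Module.End ℝ (Module.Dual ℝ g) :=
  (Module.Dual.transpose (R := ℝ)) ∘ₗ (LieAlgebra.ad ℝ g).toLinearMap

/-- Let `g` be the 3-dimensional real Lie algebra with basis `x₁, x₂, x₃` and bracket
`⁅x₁,x₂⁆ = x₃`, `⁅x₂,x₃⁆ = 0`, `⁅x₃,x₁⁆ = 0`, and equip its dual `g*` (with dual basis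
`ξ¹, ξ², ξ³`) with the Lie bracket `⁅ξ¹,ξ²⁆ = ξ²`, `⁅ξ²,ξ³⁆ = 0`, `⁅ξ³,ξ¹⁆ = −ξ³`.
Then there is no linear map `S : g* → End(g*)` satisfying the Atiyah cocycle equation
`−ad*_x ∘ S(ξ) + S(ξ) ∘ ad*_x + S(ad*_x ξ) + ad*_{ad*_ξ x} = 0` for all `x, ξ`.
(Consequently the Atiyah class of the Lie pair `(g ⋈ g*, g)` does not vanish.) -/
theorem atiyah_class_3dim_example_nonvanishing
    (g : Type*) [LieRing g] [LieAlgebra ℝ g]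
    (B : Basis (Fin 3) ℝ g)
    (hb1 : ⁅B 0, B 1⁆ = B 2) (hb2 : ⁅B 1, B 2⁆ = 0) (hb3 : ⁅B 2, B 0⁆ = 0)
    (br : Module.Dual ℝ g →ₗ[ℝ] Module.Dual ℝ g →ₗ[ℝ] Module.Dual ℝ g)
    (hskew : ∀ ξ, br ξ ξ = 0)
    (hjac : ∀ ξ η ζ, br ξ (br η ζ) = br (br ξ η) ζ + br η (br ξ ζ))
    (hd1 : br (B.dualBasis 0) (B.dualBasis 1) = B.dualBasis 1)
    (hd2 : br (B.dualBasis 1) (B.dualBasis 2) = 0)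
    (hd3 : br (B.dualBasis 2) (B.dualBasis 0) = -(B.dualBasis 2))
    (astar : Module.Dual ℝ g →ₗ[ℝ] g →ₗ[ℝ] g)
    (hastar : ∀ (ξ η : Module.Dual ℝ g) (x : g), η (astar ξ x) = br ξ η x) :
    ¬ ∃ S : Module.Dual ℝ g →ₗ[ℝ] Module.End ℝ (Module.Dual ℝ g),
        ∀ (x : g) (ξ : Module.Dual ℝ g),
          -(adStar g x * S ξ) + S ξ * adStar g x + S (adStar g x ξ)
            + adStar g (astar ξ x) = 0 := by
  rintro ⟨S, hS⟩
  -- skew-symmetry of `br`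
  have hskew' : ∀ ξ η, br ξ η = -br η ξ := by
    intro ξ η
    have h := hskew (ξ + η)
    simp only [map_add, LinearMap.add_apply, hskew ξ, hskew η, zero_add, add_zero] at h
    rw [add_comm] at h
    exact eq_neg_of_add_eq_zero_left h
  -- `B 2` is central, so `ad (B 2) = 0`
  have hb21 : ⁅B 2, B 1⁆ = 0 := by rw [← lie_skew, hb2, neg_zero]
  have had3 : LieAlgebra.ad ℝ g (B 2) = 0 := by
    apply B.ext
    intro i
    fin_cases i
    · simpa using hb3
    · simpa using hb21
    · simp
  have h0 : adStar g (B 2) = 0 := by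
    simp [adStar, had3, Module.Dual.transpose]
  -- the cocycle equation at `x = B 2`, `ξ = ξ³`
  have h := hS (B 2) (B.dualBasis 2)
  rw [h0] at h
  simp only [zero_mul, mul_zero, neg_zero, zero_add, add_zero, LinearMap.zero_apply,
    map_zero] at h
  -- compute `astar ξ³ (B 2) = -(B 0)`
  have hv : astar (B.dualBasis 2) (B 2) = -(B 0) := by
    apply B.ext_elem
    intro i
    fin_cases i
    · show B.repr (astar (B.dualBasis 2) (B 2)) 0 = B.repr (-(B 0)) 0
      rw [← B.dualBasis_apply, hastar, hd3]
      simp [Basis.dualBasis_apply_self]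
    · show B.repr (astar (B.dualBasis 2) (B 2)) 1 = B.repr (-(B 0)) 1
      rw [← B.dualBasis_apply, hastar, hskew' (B.dualBasis 2) (B.dualBasis 1), hd2]
      simp
    · show B.repr (astar (B.dualBasis 2) (B 2)) 2 = B.repr (-(B 0)) 2
      rw [← B.dualBasis_apply, hastar, hskew]
      simp
  rw [hv, map_neg] at h
  have h2 := congrArg (fun f : Module.End ℝ (Module.Dual ℝ g) => (f (B.dualBasis 2)) (B 1)) h
  simp only [LinearMap.add_apply, LinearMap.neg_apply, LinearMap.zero_apply] at h2
  simp only [adStar, LinearMap.comp_apply, LieHom.coe_toLinearMap,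
    Module.Dual.transpose_apply, LieAlgebra.ad_apply, hb1] at h2
  rw [Basis.dualBasis_apply_self] at h2
  norm_num at h2
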